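/- Let C be an additive category with an automorphism Σ, having cokernels and a Σ-progenerator P, and assume add(P) = add(Σ(P)). Then the functor C(P,−): C → Γ(P;Σ)₀-mod is an equivalence of categories, where Γ(P;Σ)₀ = C(P,P)^op is the degree-zero component of the orbit ring. -/

import Mathlib

/-!
Statement 4. Let `C` be an additive category with an automorphism `Σ` (modelled by a shift by
`ℤ`), having cokernels and a `Σ`-progenerator `P`, and assume `add(P) = add(Σ(P))`. Then the
functor `C(P,−) : C → Γ(P;Σ)₀-mod` is an equivalence of categories, where
`Γ(P;Σ)₀ = C(P,P)ᵒᵖ` (realized as `End (Opposite.op P)`) is the degree-zero component of the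
orbit ring: the functor `preadditiveCoyonedaObj (Opposite.op P)` takes values in finitely
presented modules, is fully faithful, and is dense onto the finitely presented
`Γ(P;Σ)₀`-modules; hence it induces an equivalence `C ≌ Γ(P;Σ)₀-mod`.
-/

open CategoryTheory CategoryTheory.Limits

universe v u

namespace PaperDefs

variable {C : Type u} [Category.{v} C] [Preadditive C]

/-- `g` is a cokernel of `f`, i.e. the sequence `X → Y → Z → 0` is right-exact. -/
def IsCokernelOf {X Y Z : C} (f : X ⟶ Y) (g : Y ⟶ Z) : Prop :=
  f ≫ g = 0 ∧ ∀ ⦃W : C⦄ (h : Y ⟶ W), f ≫ h = 0 → ∃! u : Z ⟶ W, g ≫ u = h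

/-- The category `C` has cokernels: every morphism admits a cokernel. -/
def HasCokernelsP (C : Type u) [Category.{v} C] [Preadditive C] : Prop :=
  ∀ ⦃X Y : C⦄ (f : X ⟶ Y), ∃ (Z : C) (g : Y ⟶ Z), IsCokernelOf f g

/-- `Q` belongs to `add U`: it is a direct summand of a finite direct sum of objects of `U`. -/
def MemAdd (U : Set C) (Q : C) : Prop :=
  ∃ (k : ℕ) (F : Fin k → C) (_ : ∀ i, F i ∈ U) (s : ∀ i, Q ⟶ F i) (r : ∀ i, F i ⟶ Q),
    (∑ i, s i ≫ r i) = 𝟙 Q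

/-- `P` is projective: `C(P, -)` sends right-exact sequences in `C` to exact sequences
of abelian groups. -/
def PaperProjective (P : C) : Prop :=
  ∀ ⦃X Y Z : C⦄ (f : X ⟶ Y) (g : Y ⟶ Z), IsCokernelOf f g →
    (∀ u : P ⟶ Z, ∃ v : P ⟶ Y, v ≫ g = u) ∧
    (∀ v : P ⟶ Y, v ≫ g = 0 → ∃ w : P ⟶ X, w ≫ f = v)

/-- `P` is a progenerator: a projective object such that every object admits
a right-exact presentation by objects of `add P`. -/
def IsProgenerator (P : C) : Prop :=
  PaperProjective P ∧
    ∀ X : C, ∃ (P₁ P₀ : C) (f : P₁ ⟶ P₀) (g : P₀ ⟶ X),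
      MemAdd {P} P₁ ∧ MemAdd {P} P₀ ∧ IsCokernelOf f g

/-- The category of finitely presented left `R`-modules. -/
def FPModuleCat (R : Type v) [Ring R] :=
  CategoryTheory.ObjectProperty.FullSubcategory
    (fun M : ModuleCat.{v} R => Module.FinitePresentation R M)

instance (R : Type v) [Ring R] : Category (FPModuleCat R) :=
  CategoryTheory.ObjectProperty.FullSubcategory.category _

/-- The left action of `End X` on `unop X ⟶ Y` for `X : Cᵒᵖ` (as in the older Mathlib). -/
instance oldMulActionLeft {X : Cᵒᵖ} {Y : C} : MulAction (End X) (Opposite.unop X ⟶ Y) where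
  smul r f := r.unop ≫ f
  one_smul := Category.id_comp
  mul_smul _ _ _ := Category.assoc _ _ _

/-- The module structure of `unop X ⟶ Y` over `End X` for `X : Cᵒᵖ` (as in the older Mathlib). -/
instance oldModuleEndLeft {X : Cᵒᵖ} {Y : C} : Module (End X) (Opposite.unop X ⟶ Y) where
  smul_add _ _ _ := Preadditive.comp_add _ _ _ _ _ _
  smul_zero _ := Limits.comp_zero
  add_smul _ _ _ := Preadditive.add_comp _ _ _ _ _ _
  zero_smul _ := Limits.zero_comp

/-- The older Mathlib `preadditiveCoyonedaObj (X : Cᵒᵖ) : C ⥤ ModuleCat (End X)`. -/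
def oldPreadditiveCoyonedaObj (X : Cᵒᵖ) : C ⥤ ModuleCat.{v} (End X) where
  obj Y := ModuleCat.of _ (Opposite.unop X ⟶ Y)
  map f := ModuleCat.ofHom
    { toFun := fun g => g ≫ f
      map_add' := fun _ _ => Preadditive.add_comp _ _ _ _ _ _
      map_smul' := fun _ _ => Category.assoc _ _ _ }
  map_id _ := by ext; exact Category.comp_id _
  map_comp _ _ := by ext; exact (Category.assoc _ _ _).symm

end PaperDefs

namespace OrbitDefs

open PaperDefs

variable {C : Type u} [Category.{v} C] [Preadditive C] [HasShift C ℤ]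

/-- The set `{Σⁿ P | n ∈ ℤ}` of powers of the automorphism `Σ` applied to `P`. -/
def shiftOrbit (P : C) : Set C := Set.range (fun n : ℤ => (shiftFunctor C n).obj P)

/-- `P` is a `Σ`-progenerator: a projective object such that every object admits a
right-exact presentation by objects of `add {Σⁿ P | n ∈ ℤ}`. -/
def IsSigmaProgenerator (P : C) : Prop :=
  PaperProjective P ∧
    ∀ X : C, ∃ (P₁ P₀ : C) (f : P₁ ⟶ P₀) (g : P₀ ⟶ X),
      MemAdd (shiftOrbit P) P₁ ∧ MemAdd (shiftOrbit P) P₀ ∧ IsCokernelOf f g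

/-- The multiplication of the orbit ring `Γ(P; Σ) = ⊕ₙ C(P, Σⁿ P)ᵒᵖ`:
for `f ∈ C(P, Σⁿ P)` and `g ∈ C(P, Σᵐ P)`, the product is `f·g = Σⁿ(g) ∘ f ∈ C(P, Σ^{n+m} P)`. -/
def orbitMul (P : C) (n m : ℤ) (f : P ⟶ (shiftFunctor C n).obj P)
    (g : P ⟶ (shiftFunctor C m).obj P) : P ⟶ (shiftFunctor C (n + m)).obj P :=
  f ≫ (shiftFunctor C n).map g ≫ (shiftFunctorAdd' C m n (n + m) (by omega)).inv.app P

/-- The orbit ring `Γ(P; Σ)` is strongly graded: `Γ_n Γ_m = Γ_{n+m}` for all `n, m ∈ ℤ`,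
expressed componentwise: each component `Γ_{n+m}` is generated, as an additive group, by the
products of elements of `Γ_n` and of `Γ_m`. -/
def OrbitRingStronglyGraded (P : C) : Prop :=
  ∀ n m : ℤ,
    AddSubgroup.closure
      {x : P ⟶ (shiftFunctor C (n + m)).obj P |
        ∃ (f : P ⟶ (shiftFunctor C n).obj P) (g : P ⟶ (shiftFunctor C m).obj P),
          x = orbitMul P n m f g} = ⊤

end OrbitDefs

namespace Helper

open PaperDefs OrbitDefs

variable {C : Type u} [Category.{v} C] [Preadditive C]

lemma memAdd_of_fintype {U : Set C} {Q : C} {ι : Type} [Fintype ι] (F : ι → C)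
    (hF : ∀ i, F i ∈ U) (s : ∀ i, Q ⟶ F i) (r : ∀ i, F i ⟶ Q)
    (h : (∑ i, s i ≫ r i) = 𝟙 Q) : MemAdd U Q := by
  classical
  obtain ⟨e⟩ : Nonempty (ι ≃ Fin (Fintype.card ι)) := ⟨Fintype.equivFin ι⟩
  refine ⟨Fintype.card ι, F ∘ e.symm, fun i => hF _, fun i => s (e.symm i),
    fun i => r (e.symm i), ?_⟩
  rw [← h]
  exact (Equiv.sum_comp e.symm fun i => s i ≫ r i)

lemma memAdd_self {U : Set C} {Q : C} (hQ : Q ∈ U) : MemAdd U Q :=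
  ⟨1, fun _ => Q, fun _ => hQ, fun _ => 𝟙 Q, fun _ => 𝟙 Q, by simp⟩

lemma memAdd_iso {U : Set C} {Q Q' : C} (h : MemAdd U Q) (e : Q ≅ Q') : MemAdd U Q' := by
  obtain ⟨k, F, hF, s, r, hsr⟩ := h
  refine ⟨k, F, hF, fun i => e.inv ≫ s i, fun i => r i ≫ e.hom, ?_⟩
  have : ∑ i, (e.inv ≫ s i) ≫ (r i ≫ e.hom) = e.inv ≫ (∑ i, s i ≫ r i) ≫ e.hom := by
    simp only [Preadditive.comp_sum, Preadditive.sum_comp, Category.assoc]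
  rw [this, hsr, Category.id_comp, e.inv_hom_id]

lemma memAdd_trans {U V : Set C} {Q : C} (h : MemAdd U Q) (hUV : ∀ R ∈ U, MemAdd V R) :
    MemAdd V Q := by
  classical
  obtain ⟨k, F, hF, s, r, hsr⟩ := h
  choose k' F' hF' s' r' hsr' using fun i => hUV (F i) (hF i)
  refine memAdd_of_fintype (ι := Σ i : Fin k, Fin (k' i)) (fun p => F' p.1 p.2)
    (fun p => hF' p.1 p.2) (fun p => s p.1 ≫ s' p.1 p.2) (fun p => r' p.1 p.2 ≫ r p.1) ?_
  rw [← Finset.univ_sigma_univ, Finset.sum_sigma]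
  have : ∀ i : Fin k, ∑ j : Fin (k' i), (s i ≫ s' i j) ≫ (r' i j ≫ r i)
      = s i ≫ (∑ j : Fin (k' i), s' i j ≫ r' i j) ≫ r i := by
    intro i
    simp only [Preadditive.comp_sum, Preadditive.sum_comp, Category.assoc]
  simp only [this, hsr', Category.id_comp]
  exact hsr

lemma memAdd_map {D : Type u} [Category.{v} D] [Preadditive D] (G : C ⥤ D) [G.Additive]
    {R Q : C} (h : MemAdd {R} Q) : MemAdd {G.obj R} (G.obj Q) := by
  obtain ⟨k, F, hF, s, r, hsr⟩ := h
  refine ⟨k, fun i => G.obj (F i), fun i => ?_,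
    fun i => G.map (s i), fun i => G.map (r i), ?_⟩
  · have := hF i; simp only [Set.mem_singleton_iff] at this ⊢; rw [this]
  · simp_rw [← G.map_comp, ← G.map_sum, hsr, G.map_id]

section Shift

variable [HasFiniteBiproducts C] [HasShift C ℤ]

lemma shift_additive (n : ℤ) : (shiftFunctor C n).Additive := by
  have : HasBinaryBiproducts C := hasBinaryBiproducts_of_finite_biproducts C
  have := preservesBinaryBiproducts_of_preservesBinaryProducts (shiftFunctor C n)
  exact Functor.additive_of_preservesBinaryBiproducts _

lemma orbit_in_add (P : C)
    (hadd : {Q : C | MemAdd {P} Q} = {Q : C | MemAdd {(shiftFunctor C (1 : ℤ)).obj P} Q})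
    (n : ℤ) : MemAdd {P} ((shiftFunctor C n).obj P) := by
  have h1 : MemAdd {P} ((shiftFunctor C (1 : ℤ)).obj P) := by
    have : (shiftFunctor C (1 : ℤ)).obj P ∈ {Q : C | MemAdd {(shiftFunctor C (1 : ℤ)).obj P} Q} :=
      memAdd_self rfl
    rw [← hadd] at this; exact this
  have hm1 : MemAdd {P} ((shiftFunctor C (-1 : ℤ)).obj P) := by
    have h0 : MemAdd {(shiftFunctor C (1 : ℤ)).obj P} P := by
      have : P ∈ {Q : C | MemAdd {P} Q} := memAdd_self rfl
      rw [hadd] at this; exact this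
    have := shift_additive (C := C) (-1 : ℤ)
    have h2 := memAdd_map (shiftFunctor C (-1 : ℤ)) h0
    -- {Σ⁻¹ Σ¹ P} ∋-add Σ⁻¹ P ; and Σ⁻¹ Σ¹ P ≅ P
    have e : P ≅ (shiftFunctor C (-1 : ℤ)).obj ((shiftFunctor C (1 : ℤ)).obj P) :=
      ((shiftFunctorCompIsoId C (1 : ℤ) (-1 : ℤ) (by omega)).app P).symm
    exact memAdd_trans h2 (fun R hR => by
      rw [Set.mem_singleton_iff] at hR
      subst hR
      exact memAdd_iso (memAdd_self rfl) e)
  induction n using Int.induction_on with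
  | zero => exact memAdd_iso (memAdd_self rfl) ((shiftFunctorZero C ℤ).app P).symm
  | succ n ih =>
    have := shift_additive (C := C) (1 : ℤ)
    have h2 := memAdd_map (shiftFunctor C (1 : ℤ)) ih
    have h3 : MemAdd {P} ((shiftFunctor C (1 : ℤ)).obj ((shiftFunctor C (n : ℤ)).obj P)) :=
      memAdd_trans h2 (fun R hR => by rw [Set.mem_singleton_iff] at hR; subst hR; exact h1)
    exact memAdd_iso h3 (((shiftFunctorAdd' C (n : ℤ) 1 (n + 1) rfl).app P).symm)
  | pred n ih =>
    have := shift_additive (C := C) (-1 : ℤ)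
    have h2 := memAdd_map (shiftFunctor C (-1 : ℤ)) ih
    have h3 : MemAdd {P} ((shiftFunctor C (-1 : ℤ)).obj ((shiftFunctor C (-n : ℤ)).obj P)) :=
      memAdd_trans h2 (fun R hR => by rw [Set.mem_singleton_iff] at hR; subst hR; exact hm1)
    exact memAdd_iso h3 (((shiftFunctorAdd' C (-n : ℤ) (-1) (-n-1) (by omega)).app P).symm)

lemma presentation_add (P : C)
    (hP : PaperProjective P ∧
      ∀ X : C, ∃ (P₁ P₀ : C) (f : P₁ ⟶ P₀) (g : P₀ ⟶ X),
        MemAdd (shiftOrbit P) P₁ ∧ MemAdd (shiftOrbit P) P₀ ∧ IsCokernelOf f g)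
    (hadd : {Q : C | MemAdd {P} Q} = {Q : C | MemAdd {(shiftFunctor C (1 : ℤ)).obj P} Q})
    (X : C) : ∃ (P₁ P₀ : C) (f : P₁ ⟶ P₀) (g : P₀ ⟶ X),
      MemAdd {P} P₁ ∧ MemAdd {P} P₀ ∧ IsCokernelOf f g := by
  obtain ⟨P₁, P₀, f, g, h₁, h₀, hc⟩ := hP.2 X
  have key : ∀ R ∈ shiftOrbit P, MemAdd {P} R := by
    rintro R ⟨n, rfl⟩
    exact orbit_in_add P hadd n
  exact ⟨P₁, P₀, f, g, memAdd_trans h₁ key, memAdd_trans h₀ key, hc⟩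

end Shift

section Modules

variable (P' : Cᵒᵖ)

/-- Composition with `f` as a linear map over `End P'`. -/
def lcomp {X Y : C} (f : X ⟶ Y) :
    (Opposite.unop P' ⟶ X) →ₗ[End P'] (Opposite.unop P' ⟶ Y) where
  toFun u := u ≫ f
  map_add' _ _ := Preadditive.add_comp _ _ _ _ _ _
  map_smul' _ _ := Category.assoc _ _ _

@[simp] lemma lcomp_apply {X Y : C} (f : X ⟶ Y) (u : Opposite.unop P' ⟶ X) :
    lcomp P' f u = u ≫ f := rfl

lemma memAdd_singleton_elim {Q R : C} (h : MemAdd {R} Q) :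
    ∃ (k : ℕ) (s : Fin k → (Q ⟶ R)) (r : Fin k → (R ⟶ Q)), (∑ i, s i ≫ r i) = 𝟙 Q := by
  obtain ⟨k, F, hF, s, r, hsr⟩ := h
  have hF' : ∀ i, F i = R := fun i => hF i
  refine ⟨k, fun i => s i ≫ eqToHom (hF' i), fun i => eqToHom (hF' i).symm ≫ r i, ?_⟩
  rw [← hsr]
  exact Finset.sum_congr rfl fun i _ => by simp

/-- Package a endomorphism of `unop P'` as an element of `End P'`. -/
def toE (f : Opposite.unop P' ⟶ Opposite.unop P') : End P' := f.op

@[simp] lemma toE_unop (f : Opposite.unop P' ⟶ Opposite.unop P') : (toE P' f).unop = f := rfl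

@[simp] lemma unop_toE_eq {e : End P'} : toE P' e.unop = e := rfl

lemma mul_toE (e : End P') (f : Opposite.unop P' ⟶ Opposite.unop P') :
    e * toE P' f = toE P' (e.unop ≫ f) := rfl

lemma one_unop : ((1 : End P')).unop = 𝟙 (Opposite.unop P') := rfl

lemma fp_of_memAdd {Q : C} (h : MemAdd {Opposite.unop P'} Q) :
    Module.FinitePresentation (End P') (Opposite.unop P' ⟶ Q) := by
  obtain ⟨k, s, r, hsr⟩ := memAdd_singleton_elim h
  let α : (Opposite.unop P' ⟶ Q) →ₗ[End P'] (Fin k → End P') :=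
    { toFun := fun u i => toE P' (u ≫ s i)
      map_add' := fun u v => by
        funext i
        show toE P' ((u + v) ≫ s i) = toE P' (u ≫ s i) + toE P' (v ≫ s i)
        rw [Preadditive.add_comp]; rfl
      map_smul' := fun e u => by
        funext i
        show toE P' ((e.unop ≫ u) ≫ s i) = e * toE P' (u ≫ s i)
        rw [mul_toE, Category.assoc] }
  let β : (Fin k → End P') →ₗ[End P'] (Opposite.unop P' ⟶ Q) :=
    { toFun := fun v => ∑ i, (v i).unop ≫ r i
      map_add' := fun u v => by
        rw [← Finset.sum_add_distrib]
        exact Finset.sum_congr rfl fun i _ => by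
          show ((u i + v i)).unop ≫ r i = _
          rw [unop_add, Preadditive.add_comp]
      map_smul' := fun e v => by
        show ∑ i, (e * v i).unop ≫ r i = e.unop ≫ ∑ i, (v i).unop ≫ r i
        rw [Preadditive.comp_sum]
        exact Finset.sum_congr rfl fun i _ => by
          rw [End.mul_def, unop_comp, Category.assoc] }
  have hβα : ∀ u, β (α u) = u := by
    intro u
    show (∑ i, (toE P' (u ≫ s i)).unop ≫ r i) = u
    simp only [toE_unop, Category.assoc]
    rw [← Preadditive.comp_sum]
    simp [hsr]
  have hsurj : Function.Surjective β := fun u => ⟨α u, hβα u⟩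
  have : Module.Finite (End P') (Opposite.unop P' ⟶ Q) :=
    Module.Finite.of_surjective β hsurj
  have : Module.Projective (End P') (Opposite.unop P' ⟶ Q) :=
    Module.Projective.of_split α β (by ext u; exact hβα u)
  exact Module.finitePresentation_of_projective _ _

lemma ker_lcomp {X P₁ P₀ : C} {d : P₁ ⟶ P₀} {g : P₀ ⟶ X}
    (hproj : PaperProjective (Opposite.unop P')) (hcok : IsCokernelOf d g) :
    LinearMap.ker (lcomp P' g) = LinearMap.range (lcomp P' d) := by
  ext v
  constructor
  · intro hv
    obtain ⟨w, hw⟩ := (hproj d g hcok).2 v hv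
    exact ⟨w, hw⟩
  · rintro ⟨w, rfl⟩
    show (w ≫ d) ≫ g = 0
    rw [Category.assoc, hcok.1, Limits.comp_zero]

lemma surjective_lcomp {X P₁ P₀ : C} {d : P₁ ⟶ P₀} {g : P₀ ⟶ X}
    (hproj : PaperProjective (Opposite.unop P')) (hcok : IsCokernelOf d g) :
    Function.Surjective (lcomp P' g) := fun u => (hproj d g hcok).1 u

lemma fp_obj {X P₁ P₀ : C} {d : P₁ ⟶ P₀} {g : P₀ ⟶ X}
    (hproj : PaperProjective (Opposite.unop P'))
    (h₁ : MemAdd {Opposite.unop P'} P₁) (h₀ : MemAdd {Opposite.unop P'} P₀)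
    (hcok : IsCokernelOf d g) :
    Module.FinitePresentation (End P') (Opposite.unop P' ⟶ X) := by
  have fp₀ := fp_of_memAdd P' h₀
  have fp₁ := fp_of_memAdd P' h₁
  have fin₁ : Module.Finite (End P') (Opposite.unop P' ⟶ P₁) := inferInstance
  refine Module.finitePresentation_of_surjective (lcomp P' g)
    (surjective_lcomp P' hproj hcok) ?_
  rw [ker_lcomp P' hproj hcok, LinearMap.range_eq_map]
  exact Submodule.FG.map _ Module.Finite.fg_top

lemma full_aux {X Y P₁ P₀ : C} {d : P₁ ⟶ P₀} {g : P₀ ⟶ X}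
    (hproj : PaperProjective (Opposite.unop P'))
    (h₁ : MemAdd {Opposite.unop P'} P₁) (h₀ : MemAdd {Opposite.unop P'} P₀)
    (hcok : IsCokernelOf d g)
    (φ : (Opposite.unop P' ⟶ X) →ₗ[End P'] (Opposite.unop P' ⟶ Y)) :
    ∃ f : X ⟶ Y, ∀ u : Opposite.unop P' ⟶ X, u ≫ f = φ u := by
  set P := Opposite.unop P'
  have hφ : ∀ (h₁ : P ⟶ P) (u : P ⟶ X), φ (h₁ ≫ u) = h₁ ≫ φ u := fun h₁ u =>
    φ.map_smul (toE P' h₁) u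
  obtain ⟨k, s, r, hsr⟩ := memAdd_singleton_elim h₀
  obtain ⟨l, t, w, htw⟩ := memAdd_singleton_elim h₁
  set ψ : P₀ ⟶ Y := ∑ i, s i ≫ φ (r i ≫ g) with hψ
  have hvψ : ∀ v : P ⟶ P₀, v ≫ ψ = φ (v ≫ g) := by
    intro v
    rw [hψ, Preadditive.comp_sum]
    have : ∀ i ∈ Finset.univ, v ≫ s i ≫ φ (r i ≫ g) = φ ((v ≫ s i ≫ r i) ≫ g) := by
      intro i _
      rw [show (v ≫ s i ≫ r i) ≫ g = (v ≫ s i) ≫ (r i ≫ g) by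
        simp only [Category.assoc], hφ (v ≫ s i) (r i ≫ g), Category.assoc]
    rw [Finset.sum_congr rfl this, ← map_sum]
    congr 1
    calc (∑ i, (v ≫ s i ≫ r i) ≫ g) = (∑ i, v ≫ s i ≫ r i) ≫ g := by
          rw [Preadditive.sum_comp]
      _ = (v ≫ ∑ i, s i ≫ r i) ≫ g := by rw [Preadditive.comp_sum]
      _ = v ≫ g := by rw [hsr, Category.comp_id]
  have hdψ : d ≫ ψ = 0 := by
    have : ∀ j : Fin l, w j ≫ d ≫ ψ = 0 := by
      intro j
      rw [← Category.assoc, hvψ (w j ≫ d)]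
      rw [Category.assoc, hcok.1, Limits.comp_zero, map_zero]
    calc d ≫ ψ = (𝟙 P₁) ≫ d ≫ ψ := by rw [Category.id_comp]
      _ = (∑ j, t j ≫ w j) ≫ d ≫ ψ := by rw [htw]
      _ = ∑ j, t j ≫ w j ≫ d ≫ ψ := by rw [Preadditive.sum_comp]; simp only [Category.assoc]
      _ = 0 := by simp only [this, Limits.comp_zero, Finset.sum_const_zero]
  obtain ⟨f, hf, -⟩ := hcok.2 ψ hdψ
  refine ⟨f, fun u => ?_⟩
  obtain ⟨v, hv⟩ := (hproj d g hcok).1 u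
  rw [← hv, Category.assoc, hf, hvψ v]

lemma faithful_aux {X Y P₁ P₀ : C} {d : P₁ ⟶ P₀} {g : P₀ ⟶ X}
    (h₀ : MemAdd {Opposite.unop P'} P₀) (hcok : IsCokernelOf d g)
    {f : X ⟶ Y} (hf : ∀ u : Opposite.unop P' ⟶ X, u ≫ f = 0) : f = 0 := by
  obtain ⟨k, s, r, hsr⟩ := memAdd_singleton_elim h₀
  have hgf : g ≫ f = 0 := by
    have h1 : ∀ i : Fin k, s i ≫ r i ≫ g ≫ f = 0 := fun i => by
      rw [← Category.assoc (r i) g f, hf (r i ≫ g), Limits.comp_zero]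
    calc g ≫ f = (∑ i, s i ≫ r i) ≫ g ≫ f := by rw [hsr, Category.id_comp]
      _ = ∑ i, s i ≫ r i ≫ g ≫ f := by rw [Preadditive.sum_comp]; simp only [Category.assoc]
      _ = 0 := by rw [Finset.sum_congr rfl fun i _ => h1 i]; simp
  obtain ⟨u, -, hu⟩ := hcok.2 (0 : P₀ ⟶ Y) (by rw [Limits.comp_zero])
  rw [hu f hgf, ← hu 0 (by simp)]

section Biprod

variable [HasFiniteBiproducts C]

/-- The hom from `P` into a finite direct sum of copies of `P`, as the free module. -/
noncomputable def bpEquiv (n : ℕ) :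
    (Opposite.unop P' ⟶ ⨁ (fun _ : Fin n => Opposite.unop P')) ≃ₗ[End P'] (Fin n → End P') where
  toFun u := fun i => toE P' (u ≫ biproduct.π _ i)
  invFun v := biproduct.lift (fun i => (v i).unop)
  left_inv u := by
    apply biproduct.hom_ext
    intro j
    rw [biproduct.lift_π, toE_unop]
  right_inv v := by
    funext i
    show toE P' (biproduct.lift (fun i => (v i).unop) ≫ biproduct.π _ i) = v i
    rw [biproduct.lift_π, unop_toE_eq]
  map_add' u v := by
    funext i
    show toE P' ((u + v) ≫ biproduct.π _ i) = toE P' (u ≫ _) + toE P' (v ≫ _)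
    rw [Preadditive.add_comp]; rfl
  map_smul' e u := by
    funext i
    show toE P' ((e.unop ≫ u) ≫ biproduct.π _ i) = e * toE P' (u ≫ biproduct.π _ i)
    rw [mul_toE, Category.assoc]

lemma bpEquiv_apply (n : ℕ) (u) (i : Fin n) :
    bpEquiv P' n u i = toE P' (u ≫ biproduct.π _ i) := rfl

lemma bpEquiv_symm_apply (n : ℕ) (v : Fin n → End P') :
    (bpEquiv P' n).symm v = biproduct.lift (fun i => (v i).unop) := rfl

lemma ess_surj_aux (hproj : PaperProjective (Opposite.unop P')) (hC : HasCokernelsP C)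
    (M : Type v) [AddCommGroup M] [Module (End P') M]
    (hM : Module.FinitePresentation (End P') M) :
    ∃ X : C, Nonempty ((Opposite.unop P' ⟶ X) ≃ₗ[End P'] M) := by
  classical
  haveI := hM
  obtain ⟨n, π, hπ⟩ := Module.Finite.exists_fin' (End P') M
  have hker : (LinearMap.ker π).FG := Module.FinitePresentation.fg_ker π hπ
  obtain ⟨m, a, ha⟩ := Submodule.fg_iff_exists_fin_generating_family.mp hker
  set P := Opposite.unop P'
  let δ : (⨁ (fun _ : Fin m => P)) ⟶ (⨁ (fun _ : Fin n => P)) :=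
    biproduct.matrix (fun i j => (a i j).unop)
  obtain ⟨X, g, hcok⟩ := hC δ
  let Φn := bpEquiv P' n
  let Φm := bpEquiv P' m
  let L := lcomp P' δ
  let T : (Fin m → End P') →ₗ[End P'] (Fin n → End P') :=
    Φn.toLinearMap ∘ₗ L ∘ₗ Φm.symm.toLinearMap
  have hι : ∀ i : Fin m, Φm.symm (Pi.single i 1) = biproduct.ι (fun _ : Fin m => P) i := by
    intro i
    rw [bpEquiv_symm_apply]
    apply biproduct.hom_ext
    intro j
    rw [biproduct.lift_π]
    rcases eq_or_ne i j with rfl | hne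
    · rw [biproduct.ι_π_self, Pi.single_eq_same, one_unop]
    · rw [biproduct.ι_π_ne _ hne, Pi.single_eq_of_ne (Ne.symm hne)]
      rfl
  have hT : ∀ i : Fin m, T (Pi.single i 1) = a i := by
    intro i
    funext j
    show Φn (L (Φm.symm (Pi.single i 1))) j = a i j
    rw [hι i]
    show toE P' ((biproduct.ι (fun _ : Fin m => P) i ≫ δ) ≫ biproduct.π _ j) = a i j
    rw [Category.assoc, biproduct.matrix_π, biproduct.ι_desc, unop_toE_eq]
  have hrange : LinearMap.range T = Submodule.span (End P') (Set.range a) := by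
    have hb := (Pi.basisFun (End P') (Fin m)).span_eq
    calc LinearMap.range T = Submodule.map T ⊤ := LinearMap.range_eq_map T
      _ = Submodule.map T (Submodule.span (End P') (Set.range (Pi.basisFun (End P') (Fin m)))) :=
          by rw [hb]
      _ = Submodule.span (End P') (T '' Set.range (Pi.basisFun (End P') (Fin m))) :=
          Submodule.map_span _ _
      _ = Submodule.span (End P') (Set.range a) := by
          rw [← Set.range_comp]
          have heq : (⇑T ∘ ⇑(Pi.basisFun (End P') (Fin m))) = a := by
            funext i
            show T (Pi.basisFun (End P') (Fin m) i) = a i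
            rw [Pi.basisFun_apply, hT]
          rw [heq]
  have hmap : Submodule.map (Φn : _ →ₗ[End P'] _) (LinearMap.ker (lcomp P' g))
      = LinearMap.ker π := by
    rw [ker_lcomp P' hproj hcok]
    have h1 : LinearMap.range L = LinearMap.range (L ∘ₗ Φm.symm.toLinearMap) :=
      (LinearMap.range_comp_of_range_eq_top L (LinearMap.range_eq_top.mpr
        Φm.symm.surjective)).symm
    show Submodule.map Φn.toLinearMap (LinearMap.range L) = LinearMap.ker π
    rw [h1, ← LinearMap.range_comp]
    show LinearMap.range T = LinearMap.ker π
    rw [hrange]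
    exact ha
  have hsurj := surjective_lcomp P' hproj hcok
  let e1 := LinearMap.quotKerEquivOfSurjective (lcomp P' g) hsurj
  let e2 := Submodule.Quotient.equiv (LinearMap.ker (lcomp P' g)) (LinearMap.ker π) Φn hmap
  let e3 := LinearMap.quotKerEquivOfSurjective π hπ
  exact ⟨X, ⟨e1.symm.trans (e2.trans e3)⟩⟩

end Biprod

end Modules

end Helper

set_option maxHeartbeats 1000000 in
open PaperDefs OrbitDefs in
theorem hom_functor_equivalence_onto_fp_modules_of_add_eq
    {C : Type u} [Category.{v} C] [Preadditive C] [HasFiniteBiproducts C] [HasShift C ℤ]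
    (hC : HasCokernelsP C) (P : C) (hP : IsSigmaProgenerator P)
    (hadd : {Q : C | MemAdd {P} Q} = {Q : C | MemAdd {(shiftFunctor C (1 : ℤ)).obj P} Q}) :
    (∀ X : C,
        Module.FinitePresentation (End (Opposite.op P))
          ((oldPreadditiveCoyonedaObj (Opposite.op P)).obj X)) ∧
    (oldPreadditiveCoyonedaObj (Opposite.op P)).Full ∧
    (oldPreadditiveCoyonedaObj (Opposite.op P)).Faithful ∧
    (∀ M : ModuleCat.{v} (End (Opposite.op P)), Module.FinitePresentation (End (Opposite.op P)) M →
        ∃ X : C, Nonempty ((oldPreadditiveCoyonedaObj (Opposite.op P)).obj X ≅ M)) ∧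
    Nonempty (C ≌ FPModuleCat (End (Opposite.op P))) := by
  have hproj : PaperProjective (Opposite.unop (Opposite.op P)) := hP.1
  have hpres := Helper.presentation_add P hP hadd
  -- (1) finite presentation of the values
  have claim1 : ∀ X : C,
      Module.FinitePresentation (End (Opposite.op P))
        ((oldPreadditiveCoyonedaObj (Opposite.op P)).obj X) := by
    intro X
    obtain ⟨P₁, P₀, d, g, h₁, h₀, hcok⟩ := hpres X
    exact Helper.fp_obj (Opposite.op P) hproj h₁ h₀ hcok
  -- (2) fullness
  have claim2 : (oldPreadditiveCoyonedaObj (Opposite.op P)).Full := by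
    refine ⟨fun {X Y} φ => ?_⟩
    obtain ⟨P₁, P₀, d, g, h₁, h₀, hcok⟩ := hpres X
    obtain ⟨f, hf⟩ := Helper.full_aux (Opposite.op P) hproj h₁ h₀ hcok φ.hom
    exact ⟨f, by ext u; exact hf u⟩
  -- (3) faithfulness
  have claim3 : (oldPreadditiveCoyonedaObj (Opposite.op P)).Faithful := by
    refine ⟨fun {X Y f f'} h => ?_⟩
    obtain ⟨P₁, P₀, d, g, h₁, h₀, hcok⟩ := hpres X
    have h0 : ∀ u : Opposite.unop (Opposite.op P) ⟶ X, u ≫ (f - f') = 0 := by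
      intro u
      have := congrArg (fun ψ => ModuleCat.Hom.hom ψ u) h
      simp only [Preadditive.comp_sub]
      exact sub_eq_zero.mpr this
    have := Helper.faithful_aux (Opposite.op P) h₀ hcok h0
    exact sub_eq_zero.mp this
  -- (4) essential surjectivity onto finitely presented modules
  have claim4 : ∀ M : ModuleCat.{v} (End (Opposite.op P)),
      Module.FinitePresentation (End (Opposite.op P)) M →
      ∃ X : C, Nonempty ((oldPreadditiveCoyonedaObj (Opposite.op P)).obj X ≅ M) := by
    intro M hM
    obtain ⟨X, ⟨e⟩⟩ := Helper.ess_surj_aux (Opposite.op P) hproj hC M hM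
    letI : Module (End (Opposite.op P)) (Opposite.unop (Opposite.op P) ⟶ X) :=
      PaperDefs.oldModuleEndLeft
    exact ⟨X, ⟨e.toModuleIso⟩⟩
  -- (5) the equivalence
  refine ⟨claim1, claim2, claim3, claim4, ?_⟩
  letI G : C ⥤ FPModuleCat (End (Opposite.op P)) :=
    ObjectProperty.lift _ (oldPreadditiveCoyonedaObj (Opposite.op P)) claim1
  haveI := claim2
  haveI := claim3
  haveI hGfull : (ObjectProperty.lift (fun M : ModuleCat.{v} (End (Opposite.op P)) =>
      Module.FinitePresentation (End (Opposite.op P)) M)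
      (oldPreadditiveCoyonedaObj (Opposite.op P)) claim1).Full := inferInstance
  haveI hGfaithful : (ObjectProperty.lift (fun M : ModuleCat.{v} (End (Opposite.op P)) =>
      Module.FinitePresentation (End (Opposite.op P)) M)
      (oldPreadditiveCoyonedaObj (Opposite.op P)) claim1).Faithful := inferInstance
  haveI : G.Full := hGfull
  haveI : G.Faithful := hGfaithful
  haveI : G.EssSurj := by
    refine ⟨fun M => ?_⟩
    obtain ⟨X, ⟨i⟩⟩ := claim4 M.obj M.property
    exact ⟨X, ⟨ObjectProperty.isoMk _ i⟩⟩
  haveI : G.IsEquivalence := {}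
  exact ⟨G.asEquivalence⟩
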